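/- Let n be an integer with n ≤ −3, set l = |n| > 2, d = 2 − 2cos(π/(2l−1)) and d′ = 2 − 2cos(3π/(2l−1)), so that 0 < d < d′ < 4. Then for every real s > 0 there exists a real number T with s + 2 + d/s < T < s + 2 + d′/s such that φ_n(s,T) = 0. -/
import Mathlib


/-- Auxiliary Chebyshev-like sequence: `tauAux k 0 = 0`, `tauAux k 1 = 1`,
`tauAux k (m+2) = k * tauAux k (m+1) - tauAux k m`. -/
def tauAux (k : ℝ) : ℕ → ℝ
  | 0 => 0
  | 1 => 1
  | (m + 2) => k * tauAux k (m + 1) - tauAux k m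

/-- The two-sided sequence `τ_m` (`m ∈ ℤ`) determined by `τ_0 = 0`, `τ_1 = 1` and
`τ_{m+1} = (s² - (T-2)s + 2) τ_m - τ_{m-1}`; it satisfies `τ_{-m} = -τ_m`. -/
def tauZ (s T : ℝ) (m : ℤ) : ℝ :=
  if 0 ≤ m then tauAux (s ^ 2 - (T - 2) * s + 2) m.toNat
  else -tauAux (s ^ 2 - (T - 2) * s + 2) (-m).toNat

/-- The Riley polynomial of the `n`-twist knot: `φ_n(s,T) = τ_{n+1} - (T - 1 - s) τ_n`. -/
def rileyPhi (n : ℤ) (s T : ℝ) : ℝ :=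
  tauZ s T (n + 1) - (T - 1 - s) * tauZ s T n

lemma tauAux_mul_sin (θ : ℝ) : ∀ m : ℕ,
    tauAux (2 * Real.cos θ) m * Real.sin θ = Real.sin (m * θ)
  | 0 => by simp [tauAux]
  | 1 => by simp [tauAux]
  | (m + 2) => by
    have h1 := tauAux_mul_sin θ (m + 1)
    have h2 := tauAux_mul_sin θ m
    have key : Real.sin (((m : ℝ) + 2) * θ)
        = 2 * Real.cos θ * Real.sin (((m : ℝ) + 1) * θ) - Real.sin ((m : ℝ) * θ) := by
      have h₁ := Real.sin_add (((m : ℝ) + 1) * θ) θ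
      have h₂ := Real.sin_sub (((m : ℝ) + 1) * θ) θ
      have e1 : ((m : ℝ) + 1) * θ + θ = ((m : ℝ) + 2) * θ := by ring
      have e2 : ((m : ℝ) + 1) * θ - θ = (m : ℝ) * θ := by ring
      rw [e1] at h₁; rw [e2] at h₂
      linarith
    show (2 * Real.cos θ * tauAux (2 * Real.cos θ) (m + 1) - tauAux (2 * Real.cos θ) m)
        * Real.sin θ = Real.sin ((((m : ℕ) + 2 : ℕ) : ℝ) * θ)
    push_cast at h1 ⊢
    linear_combination 2 * Real.cos θ * h1 - h2 - key

lemma continuous_tauAux : ∀ m : ℕ, Continuous (fun k : ℝ => tauAux k m)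
  | 0 => by simpa [tauAux] using continuous_const
  | 1 => by simpa [tauAux] using continuous_const
  | (m + 2) => by
    have h1 := continuous_tauAux (m + 1)
    have h2 := continuous_tauAux m
    show Continuous (fun k : ℝ => k * tauAux k (m + 1) - tauAux k m)
    exact (continuous_id.mul h1).sub h2

lemma continuous_tauZ (s : ℝ) (m : ℤ) : Continuous (fun T => tauZ s T m) := by
  unfold tauZ
  by_cases h : 0 ≤ m <;> simp only [h, if_true, if_false]
  · exact (continuous_tauAux _).comp (by continuity)
  · exact ((continuous_tauAux _).comp (by continuity)).neg

theorem riley_root_exists_neg_twist (n : ℤ) (hn : n ≤ -3) :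
    0 < 2 - 2 * Real.cos (Real.pi / (2 * (|n| : ℝ) - 1)) ∧
    2 - 2 * Real.cos (Real.pi / (2 * (|n| : ℝ) - 1)) <
      2 - 2 * Real.cos (3 * Real.pi / (2 * (|n| : ℝ) - 1)) ∧
    2 - 2 * Real.cos (3 * Real.pi / (2 * (|n| : ℝ) - 1)) < 4 ∧
    ∀ s : ℝ, 0 < s → ∃ T : ℝ,
      s + 2 + (2 - 2 * Real.cos (Real.pi / (2 * (|n| : ℝ) - 1))) / s < T ∧
      T < s + 2 + (2 - 2 * Real.cos (3 * Real.pi / (2 * (|n| : ℝ) - 1))) / s ∧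
      rileyPhi n s T = 0 := by
  obtain ⟨L, hL3, hnL⟩ : ∃ L : ℕ, 3 ≤ L ∧ n = -(L : ℤ) := ⟨(-n).toNat, by omega, by omega⟩
  have habs : (|n| : ℝ) = (L : ℝ) := by rw [hnL]; simp
  rw [habs]
  have hLr : (3 : ℝ) ≤ (L : ℝ) := by exact_mod_cast hL3
  set N : ℝ := 2 * (L : ℝ) - 1 with hN
  have hN5 : (5 : ℝ) ≤ N := by simp [hN]; linarith
  have hNpos : 0 < N := by linarith
  have pi_pos := Real.pi_pos
  set θ₁ : ℝ := Real.pi / N with hθ₁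
  set θ₂ : ℝ := 3 * Real.pi / N with hθ₂
  have h01 : 0 < θ₁ := div_pos pi_pos hNpos
  have h02 : 0 < θ₂ := div_pos (by linarith) hNpos
  have h12 : θ₁ < θ₂ := by
    rw [hθ₁, hθ₂, div_lt_div_iff₀ hNpos hNpos]
    nlinarith
  have h2pi : θ₂ < Real.pi := by
    rw [hθ₂, div_lt_iff₀ hNpos]; nlinarith
  have hmem0 : (0:ℝ) ∈ Set.Icc 0 Real.pi := ⟨le_refl _, le_of_lt pi_pos⟩
  have hmem1 : θ₁ ∈ Set.Icc 0 Real.pi := ⟨h01.le, by linarith⟩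
  have hmem2 : θ₂ ∈ Set.Icc 0 Real.pi := ⟨h02.le, h2pi.le⟩
  have hmemπ : Real.pi ∈ Set.Icc 0 Real.pi := ⟨pi_pos.le, le_refl _⟩
  have hc1 : Real.cos θ₁ < 1 := by
    have := Real.strictAntiOn_cos hmem0 hmem1 h01
    simpa using this
  have hc12 : Real.cos θ₂ < Real.cos θ₁ := Real.strictAntiOn_cos hmem1 hmem2 h12
  have hc2 : -1 < Real.cos θ₂ := by
    have := Real.strictAntiOn_cos hmem2 hmemπ h2pi
    simpa using this
  refine ⟨by linarith, by linarith, by linarith, ?_⟩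
  intro s hs
  have hs' : s ≠ 0 := ne_of_gt hs
  have hphi : ∀ θ : ℝ, rileyPhi n s (s + 2 + (2 - 2 * Real.cos θ) / s) * Real.sin θ
      = (- Real.sin (((L:ℝ) - 1) * θ))
        + (1 + (2 - 2 * Real.cos θ) / s) * Real.sin ((L:ℝ) * θ) := by
    intro θ
    have hk : s ^ 2 - ((s + 2 + (2 - 2 * Real.cos θ) / s) - 2) * s + 2 = 2 * Real.cos θ := by
      field_simp
      ring
    have hT1s : (s + 2 + (2 - 2 * Real.cos θ) / s) - 1 - s
        = 1 + (2 - 2 * Real.cos θ) / s := by ring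
    unfold rileyPhi tauZ
    rw [if_neg (by omega), if_neg (by omega), hk, hT1s]
    have e1 : (-(n+1)).toNat = L - 1 := by omega
    have e2 : (-n).toNat = L := by omega
    rw [e1, e2]
    have t1 := tauAux_mul_sin θ (L-1)
    have t2 := tauAux_mul_sin θ L
    have cL : ((L - 1 : ℕ) : ℝ) = (L:ℝ) - 1 := by
      have h1L : 1 ≤ L := by omega
      push_cast [h1L]
      ring
    rw [cL] at t1
    linear_combination (-1 : ℝ) * t1 + (1 + (2 - 2 * Real.cos θ) / s) * t2
  have hsin1 : 0 < Real.sin θ₁ := Real.sin_pos_of_pos_of_lt_pi h01 (by linarith)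
  have hsin2 : 0 < Real.sin θ₂ := Real.sin_pos_of_pos_of_lt_pi h02 h2pi
  have hsL1 : 0 < Real.sin ((L:ℝ) * θ₁) := by
    apply Real.sin_pos_of_pos_of_lt_pi
    · exact mul_pos (by linarith) h01
    · rw [hθ₁, mul_div_assoc', div_lt_iff₀ hNpos]
      nlinarith
  have hL2lo : Real.pi < (L:ℝ) * θ₂ := by
    rw [hθ₂, mul_div_assoc', lt_div_iff₀ hNpos]
    nlinarith
  have hL2hi : (L:ℝ) * θ₂ < 2 * Real.pi := by
    rw [hθ₂, mul_div_assoc', div_lt_iff₀ hNpos]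
    nlinarith
  have hsL2 : Real.sin ((L:ℝ) * θ₂) < 0 := by
    have h := Real.sin_pos_of_pos_of_lt_pi (x := (L:ℝ) * θ₂ - Real.pi)
      (by linarith) (by linarith)
    rw [Real.sin_sub_pi] at h
    linarith
  have id1 : ((L:ℝ) - 1) * θ₁ = Real.pi - (L:ℝ) * θ₁ := by
    rw [hθ₁]; field_simp; ring
  have id2 : ((L:ℝ) - 1) * θ₂ = (Real.pi - (L:ℝ) * θ₂) + 2 * Real.pi := by
    rw [hθ₂]; field_simp; ring
  have sid1 : Real.sin (((L:ℝ) - 1) * θ₁) = Real.sin ((L:ℝ) * θ₁) := by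
    rw [id1, Real.sin_pi_sub]
  have sid2 : Real.sin (((L:ℝ) - 1) * θ₂) = Real.sin ((L:ℝ) * θ₂) := by
    rw [id2, Real.sin_add_two_pi, Real.sin_pi_sub]
  have hv1 : rileyPhi n s (s + 2 + (2 - 2 * Real.cos θ₁) / s) * Real.sin θ₁
      = ((2 - 2 * Real.cos θ₁) / s) * Real.sin ((L:ℝ) * θ₁) := by
    rw [hphi θ₁, sid1]; ring
  have hv2 : rileyPhi n s (s + 2 + (2 - 2 * Real.cos θ₂) / s) * Real.sin θ₂
      = ((2 - 2 * Real.cos θ₂) / s) * Real.sin ((L:ℝ) * θ₂) := by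
    rw [hphi θ₂, sid2]; ring
  have hpos1 : 0 < rileyPhi n s (s + 2 + (2 - 2 * Real.cos θ₁) / s) := by
    have hr : 0 < ((2 - 2 * Real.cos θ₁) / s) * Real.sin ((L:ℝ) * θ₁) :=
      mul_pos (div_pos (by linarith) hs) hsL1
    by_contra hcon
    push_neg at hcon
    have := mul_nonpos_of_nonpos_of_nonneg hcon hsin1.le
    linarith [hv1 ▸ this]
  have hneg2 : rileyPhi n s (s + 2 + (2 - 2 * Real.cos θ₂) / s) < 0 := by
    have hr : ((2 - 2 * Real.cos θ₂) / s) * Real.sin ((L:ℝ) * θ₂) < 0 :=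
      mul_neg_of_pos_of_neg (div_pos (by linarith) hs) hsL2
    by_contra hcon
    push_neg at hcon
    have := mul_nonneg hcon hsin2.le
    linarith [hv2 ▸ this]
  have hT12 : s + 2 + (2 - 2 * Real.cos θ₁) / s < s + 2 + (2 - 2 * Real.cos θ₂) / s := by
    have : (2 - 2 * Real.cos θ₁) / s < (2 - 2 * Real.cos θ₂) / s := by
      rw [div_lt_div_iff₀ hs hs]; nlinarith
    linarith
  have hcont : Continuous (fun T => rileyPhi n s T) := by
    unfold rileyPhi
    exact (continuous_tauZ s (n+1)).sub
      (((continuous_id.sub continuous_const).sub continuous_const).mul (continuous_tauZ s n))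
  obtain ⟨T, hT, hfT⟩ := intermediate_value_Ioo' hT12.le hcont.continuousOn ⟨hneg2, hpos1⟩
  exact ⟨T, hT.1, hT.2, hfT⟩
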